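/- Let D > 0, θ > 0, r > 1, 0 < ρ < min{1, r−1}, and let δ be a random variable with CDF F(x) = (x/D)(2 − x/D) on [0, D], F(x) = 1 for x ≥ D. Set a_j = (j−1)r + ρ, b_j = j·r − ρ. If b_m < D/θ < a_{m+1} for some 1 ≤ m ≤ N−1, then P(δ ∈ ⋃_{j=1}^{N−1} (θa_j, θb_j)) = (r − 2ρ)(θ/D)(2m − (rθ/D)m²). -/

import Mathlib

open MeasureTheory

set_option maxHeartbeats 2000000 in
theorem stmt_9 {Ω : Type*} [MeasurableSpace Ω] (P : Measure Ω) [IsProbabilityMeasure P]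
    (D θ r ρ : ℝ) (hD : 0 < D) (hθ : 0 < θ) (hr : 1 < r) (hρ0 : 0 < ρ)
    (hρ : ρ < min 1 (r - 1))
    (δ : Ω → ℝ) (hδ : Measurable δ)
    (hcdf₁ : ∀ x : ℝ, 0 ≤ x → x < D → P {ω | δ ω ≤ x} = ENNReal.ofReal ((x / D) * (2 - x / D)))
    (hcdf₂ : ∀ x : ℝ, D ≤ x → P {ω | δ ω ≤ x} = 1)
    (a b : ℕ → ℝ)
    (ha : ∀ j : ℕ, a j = ((j : ℝ) - 1) * r + ρ)
    (hb : ∀ j : ℕ, b j = (j : ℝ) * r - ρ)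
    (N m : ℕ) (hm1 : 1 ≤ m) (hm2 : m ≤ N - 1) (hN : 2 ≤ N)
    (hlo : b m < D / θ) (hhi : D / θ < a (m + 1)) :
    P {ω | δ ω ∈ ⋃ j ∈ Finset.Icc 1 (N - 1), Set.Ioo (θ * a j) (θ * b j)}
      = ENNReal.ofReal ((r - 2 * ρ) * (θ / D) * (2 * (m : ℝ) - (r * θ / D) * (m : ℝ) ^ 2)) := by
  have hρ1 : ρ < 1 := lt_of_lt_of_le hρ (min_le_left _ _)
  have hρr : ρ < r - 1 := lt_of_lt_of_le hρ (min_le_right _ _)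
  have hr2ρ : 2 * ρ < r := by linarith
  set F : ℝ → ℝ := fun x => x / D * (2 - x / D) with hF
  have hcdf₁' : ∀ x : ℝ, 0 ≤ x → x < D → P (δ ⁻¹' Set.Iic x) = ENNReal.ofReal (F x) :=
    fun x hx hxD => hcdf₁ x hx hxD
  have hcdf₂' : ∀ x : ℝ, D ≤ x → P (δ ⁻¹' Set.Iic x) = 1 := fun x hx => hcdf₂ x hx
  have hFnonneg : ∀ x : ℝ, 0 ≤ x → x < D → 0 ≤ F x := by
    intro x hx hxD
    have h1 : 0 ≤ x / D := div_nonneg hx hD.le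
    have h2 : x / D < 1 := (div_lt_one hD).mpr hxD
    simp only [hF]
    nlinarith
  have hFmono : ∀ x y : ℝ, 0 ≤ x → x ≤ y → y < D → F x ≤ F y := by
    intro x y hx hxy hyD
    have h1 : 0 ≤ x / D := div_nonneg hx hD.le
    have h2 : x / D ≤ y / D := by gcongr
    have h3 : y / D < 1 := (div_lt_one hD).mpr hyD
    simp only [hF]
    nlinarith [mul_nonneg (sub_nonneg.mpr h2) (by linarith : (0:ℝ) ≤ 2 - x/D - y/D)]
  -- measure of Ioc
  have hIoc : ∀ x y : ℝ, 0 ≤ x → x ≤ y → y < D →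
      P (δ ⁻¹' Set.Ioc x y) = ENNReal.ofReal (F y - F x) := by
    intro x y hx hxy hyD
    have hxD : x < D := lt_of_le_of_lt hxy hyD
    have hset : Set.Ioc x y = Set.Iic y \ Set.Iic x := Set.Iic_sdiff_Iic.symm
    rw [hset, Set.preimage_diff,
      measure_diff (Set.preimage_mono (Set.Iic_subset_Iic.mpr hxy))
        ((hδ measurableSet_Iic).nullMeasurableSet) (measure_ne_top P _),
      hcdf₁' x hx hxD, hcdf₁' y (hx.trans hxy) hyD,
      ENNReal.ofReal_sub _ (hFnonneg x hx hxD)]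
  -- singletons are null
  have hsingle : ∀ y : ℝ, 0 < y → y < D → P (δ ⁻¹' {y}) = 0 := by
    intro y hy0 hyD
    by_contra h
    have hfin : P (δ ⁻¹' {y}) ≠ ⊤ := measure_ne_top P _
    set c : ℝ := (P (δ ⁻¹' {y})).toReal with hc
    have hc0 : 0 < c := ENNReal.toReal_pos h hfin
    set ε : ℝ := min y (c * D / 4) with hε
    have hε0 : 0 < ε := lt_min hy0 (by positivity)
    have hεy : ε ≤ y := min_le_left _ _
    have hεc : ε ≤ c * D / 4 := min_le_right _ _
    have hsub : (δ ⁻¹' {y} : Set Ω) ⊆ δ ⁻¹' Set.Ioc (y - ε) y := by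
      intro ω hω
      simp only [Set.mem_preimage, Set.mem_singleton_iff] at hω
      simp [Set.mem_preimage, Set.mem_Ioc, hω]
      linarith
    have hle : P (δ ⁻¹' {y}) ≤ ENNReal.ofReal (F y - F (y - ε)) := by
      rw [← hIoc (y - ε) y (by linarith) (by linarith) hyD]
      exact measure_mono hsub
    have hdiff : F y - F (y - ε) ≤ c / 2 := by
      have h1 : F y - F (y - ε) ≤ 2 * ε / D := by
        simp only [hF]
        have key : 0 ≤ ε * (2 * y - ε) := mul_nonneg hε0.le (by linarith)
        have hD2 : (0:ℝ) < D ^ 2 := by positivity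
        field_simp
        nlinarith
      have h2 : 2 * ε / D ≤ c / 2 := by
        rw [div_le_div_iff₀ hD (by norm_num : (0:ℝ) < 2)]
        nlinarith
      linarith
    have : P (δ ⁻¹' {y}) ≤ ENNReal.ofReal (c / 2) :=
      hle.trans (ENNReal.ofReal_le_ofReal hdiff)
    have hcle : c ≤ c / 2 := by
      have := ENNReal.toReal_mono (by simp) this
      rwa [ENNReal.toReal_ofReal (by linarith)] at this
    linarith
  -- measure of Ioo
  have hIoo : ∀ x y : ℝ, 0 ≤ x → x ≤ y → 0 < y → y < D →
      P (δ ⁻¹' Set.Ioo x y) = ENNReal.ofReal (F y - F x) := by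
    intro x y hx hxy hy0 hyD
    have hset : Set.Ioo x y = Set.Ioc x y \ {y} := Set.Ioc_sdiff_right.symm
    rw [hset, Set.preimage_diff, measure_diff_null (hsingle y hy0 hyD), hIoc x y hx hxy hyD]
  -- measure beyond D is zero
  have hIoi : P (δ ⁻¹' Set.Ioi D) = 0 := by
    have hcompl : (δ ⁻¹' Set.Ioi D : Set Ω) = (δ ⁻¹' Set.Iic D)ᶜ := by
      rw [← Set.compl_Iic, Set.preimage_compl]
    rw [hcompl, measure_compl (hδ measurableSet_Iic) (measure_ne_top P _),
      hcdf₂' D le_rfl, measure_univ, tsub_self]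
  -- basic inequalities on a, b
  have hamono : ∀ i j : ℕ, i ≤ j → a i ≤ a j := by
    intro i j hij
    rw [ha, ha]
    have : (i:ℝ) ≤ (j:ℝ) := Nat.cast_le.mpr hij
    nlinarith
  have hbmono : ∀ i j : ℕ, i ≤ j → b i ≤ b j := by
    intro i j hij
    rw [hb, hb]
    have : (i:ℝ) ≤ (j:ℝ) := Nat.cast_le.mpr hij
    nlinarith
  have hab : ∀ j : ℕ, a j ≤ b j := by
    intro j; rw [ha, hb]; linarith
  have hba : ∀ i j : ℕ, i < j → b i ≤ a j := by
    intro i j hij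
    rw [hb, ha]
    have : (i:ℝ) + 1 ≤ (j:ℝ) := by exact_mod_cast hij
    nlinarith
  have ha1pos : ∀ j : ℕ, 1 ≤ j → 0 < a j := by
    intro j hj
    have : a 1 ≤ a j := hamono 1 j hj
    rw [ha] at this
    simp at this
    rw [ha]
    have : (1:ℝ) ≤ (j:ℝ) := by exact_mod_cast hj
    nlinarith
  -- rewrite the target set as a preimage of a finite disjoint union
  have hsetEq : {ω | δ ω ∈ ⋃ j ∈ Finset.Icc 1 (N - 1), Set.Ioo (θ * a j) (θ * b j)}
      = ⋃ j ∈ Finset.Icc 1 (N - 1), δ ⁻¹' Set.Ioo (θ * a j) (θ * b j) := by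
    rw [show {ω | δ ω ∈ ⋃ j ∈ Finset.Icc 1 (N - 1), Set.Ioo (θ * a j) (θ * b j)}
      = δ ⁻¹' (⋃ j ∈ Finset.Icc 1 (N - 1), Set.Ioo (θ * a j) (θ * b j)) from rfl,
      Set.preimage_iUnion₂]
  rw [hsetEq]
  have hdisj : (↑(Finset.Icc 1 (N - 1)) : Set ℕ).PairwiseDisjoint
      (fun j => δ ⁻¹' Set.Ioo (θ * a j) (θ * b j)) := by
    intro i hi j hj hij
    have key : ∀ i j : ℕ, i < j →
        Disjoint (δ ⁻¹' Set.Ioo (θ * a i) (θ * b i)) (δ ⁻¹' Set.Ioo (θ * a j) (θ * b j)) := by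
      intro i j hij
      apply Disjoint.preimage
      rw [Set.disjoint_left]
      intro z hz1 hz2
      have h1 : θ * b i ≤ θ * a j :=
        mul_le_mul_of_nonneg_left (hba i j hij) hθ.le
      have := hz1.2
      have := hz2.1
      simp only [Set.mem_Ioo] at hz1 hz2
      linarith [hz1.2, hz2.1]
    rcases lt_or_gt_of_ne hij with h | h
    · exact key i j h
    · exact (key j i h).symm
  rw [measure_biUnion_finset hdisj
    (fun j _ => hδ measurableSet_Ioo)]
  -- terms with j > m vanish
  have hzero : ∀ j ∈ Finset.Icc 1 (N - 1), j ∉ Finset.Icc 1 m →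
      P (δ ⁻¹' Set.Ioo (θ * a j) (θ * b j)) = 0 := by
    intro j hj hj'
    simp only [Finset.mem_Icc] at hj hj'
    have hjm : m + 1 ≤ j := by omega
    have haj : D < θ * a j := by
      have h1 : a (m + 1) ≤ a j := hamono _ _ hjm
      have h2 : D / θ < a j := lt_of_lt_of_le hhi h1
      calc D = θ * (D / θ) := by field_simp
        _ < θ * a j := by exact mul_lt_mul_of_pos_left h2 hθ
    apply measure_mono_null _ hIoi
    intro ω hω
    simp only [Set.mem_preimage, Set.mem_Ioo] at hω
    simp only [Set.mem_preimage, Set.mem_Ioi]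
    linarith [hω.1]
  rw [← Finset.sum_subset (Finset.Icc_subset_Icc le_rfl hm2) hzero]
  -- compute terms for 1 ≤ j ≤ m
  have hterm : ∀ j ∈ Finset.Icc 1 m,
      P (δ ⁻¹' Set.Ioo (θ * a j) (θ * b j)) = ENNReal.ofReal (F (θ * b j) - F (θ * a j)) := by
    intro j hj
    simp only [Finset.mem_Icc] at hj
    have haj : 0 < a j := ha1pos j hj.1
    have habj : a j ≤ b j := hab j
    have hbD : θ * b j < D := by
      have h1 : b j ≤ b m := hbmono _ _ hj.2
      have h2 : b j < D / θ := lt_of_le_of_lt h1 hlo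
      calc θ * b j < θ * (D / θ) := mul_lt_mul_of_pos_left h2 hθ
        _ = D := by field_simp
    exact hIoo (θ * a j) (θ * b j) (by positivity) (mul_le_mul_of_nonneg_left habj hθ.le)
      (mul_pos hθ (haj.trans_le habj)) hbD
  rw [Finset.sum_congr rfl hterm]
  have hnn : ∀ j ∈ Finset.Icc 1 m, 0 ≤ F (θ * b j) - F (θ * a j) := by
    intro j hj
    simp only [Finset.mem_Icc] at hj
    have haj : 0 < a j := ha1pos j hj.1
    have habj : a j ≤ b j := hab j
    have hbD : θ * b j < D := by
      have h1 : b j ≤ b m := hbmono _ _ hj.2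
      have h2 : b j < D / θ := lt_of_le_of_lt h1 hlo
      calc θ * b j < θ * (D / θ) := mul_lt_mul_of_pos_left h2 hθ
        _ = D := by field_simp
    have := hFmono (θ * a j) (θ * b j) (by positivity)
      (mul_le_mul_of_nonneg_left habj hθ.le) hbD
    linarith
  rw [← ENNReal.ofReal_sum_of_nonneg hnn]
  congr 1
  -- the closed-form sum
  have hsum : ∀ n : ℕ, ∑ j ∈ Finset.Icc 1 n, (F (θ * b j) - F (θ * a j))
      = (r - 2 * ρ) * (θ / D) * (2 * (n : ℝ) - (r * θ / D) * (n : ℝ) ^ 2) := by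
    intro n
    induction n with
    | zero => simp
    | succ k ih =>
      rw [Finset.sum_Icc_succ_top (by omega : 1 ≤ k + 1), ih, ha, hb]
      simp only [hF]
      push_cast
      field_simp
      ring
  exact hsum m
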